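/- Consider a single score-update step s̃ = s − α • g with α > 0, where g i = ∂L/∂m_i is the (fixed) gradient of the loss with respect to the mask. Let m, m̃ be the top-k masks of s, s̃ (all score values distinct before and after the update), let A = {i | m i = 0 ∧ m̃ i = 1} and B = {j | m j = 1 ∧ m̃ j = 0}. Then the first-order loss change ∑_{i∈A} g i − ∑_{j∈B} g j is ≤ 0, and it is < 0 whenever A is nonempty. -/

import Mathlib

noncomputable def topkMask (n k : ℕ) (s : Fin n → ℝ) (i : Fin n) : Bool :=
  decide ((Finset.univ.filter (fun j => s i < s j)).card < k)

namespace TopkAux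

open Finset

noncomputable def rank {n : ℕ} (s : Fin n → ℝ) (i : Fin n) : ℕ :=
  (Finset.univ.filter (fun j => s i < s j)).card

lemma rank_lt_of_lt {n : ℕ} (s : Fin n → ℝ) {i j : Fin n} (h : s i < s j) :
    rank s j < rank s i := by
  apply Finset.card_lt_card
  constructor
  · intro x hx
    simp only [mem_filter, mem_univ, true_and] at hx ⊢
    exact h.trans hx
  · intro hsub
    have hj : j ∈ Finset.univ.filter (fun x => s i < s x) := by
      simp [h]
    have := hsub hj
    simp at this

lemma rank_injective {n : ℕ} {s : Fin n → ℝ} (hinj : Function.Injective s) :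
    Function.Injective (rank s) := by
  intro i j hij
  by_contra hne
  rcases lt_trichotomy (s i) (s j) with h | h | h
  · exact absurd hij (Nat.ne_of_lt (rank_lt_of_lt s h)).symm
  · exact hne (hinj h)
  · exact absurd hij (Nat.ne_of_lt (rank_lt_of_lt s h))

lemma rank_lt_n {n : ℕ} (s : Fin n → ℝ) (i : Fin n) : rank s i < n := by
  have h : Finset.univ.filter (fun j => s i < s j) ⊆ Finset.univ.erase i := by
    intro x hx
    simp only [mem_filter, mem_univ, true_and] at hx
    simp only [mem_erase, mem_univ, and_true]
    intro hxi; rw [hxi] at hx; exact lt_irrefl _ hx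
  calc rank s i ≤ (Finset.univ.erase i).card := Finset.card_le_card h
    _ < Finset.univ.card := Finset.card_erase_lt_of_mem (mem_univ i)
    _ = n := by simp

lemma card_mask {n k : ℕ} {s : Fin n → ℝ} (hinj : Function.Injective s) :
    (Finset.univ.filter (fun i => topkMask n k s i = true)).card = min k n := by
  have h1 : (Finset.univ.filter (fun i => topkMask n k s i = true)) =
      Finset.univ.filter (fun i => rank s i < k) := by
    ext i
    rw [Finset.mem_filter, Finset.mem_filter]
    simp [topkMask, rank]
  rw [h1]
  have himg : (Finset.univ : Finset (Fin n)).image (rank s) = Finset.range n := by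
    apply Finset.eq_of_subset_of_card_le
    · intro x hx
      simp only [mem_image] at hx
      obtain ⟨i, _, rfl⟩ := hx
      simpa using rank_lt_n s i
    · rw [Finset.card_range, Finset.card_image_of_injective _ (rank_injective hinj),
        Finset.card_univ, Fintype.card_fin]
  have h2 : (Finset.univ.filter (fun i => rank s i < k)).card =
      ((Finset.univ.image (rank s)).filter (fun m => m < k)).card := by
    rw [Finset.filter_image]
    exact (Finset.card_image_of_injective _ (rank_injective hinj)).symm
  rw [h2, himg]
  have h3 : (Finset.range n).filter (fun m => m < k) = Finset.range (min k n) := by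
    ext m
    simp [Nat.lt_min, and_comm]
  rw [h3, Finset.card_range]

end TopkAux

theorem stmt_9 (n k : ℕ) (hk : k ≤ n)
    (s g : Fin n → ℝ) (α : ℝ) (hα : 0 < α)
    (s' : Fin n → ℝ) (hs' : s' = fun i => s i - α * g i)
    (hinj : Function.Injective s) (hinj' : Function.Injective s')
    (A B : Finset (Fin n))
    (hA : A = Finset.univ.filter
        (fun i => topkMask n k s i = false ∧ topkMask n k s' i = true))
    (hB : B = Finset.univ.filter
        (fun j => topkMask n k s j = true ∧ topkMask n k s' j = false)) :
    (∑ i ∈ A, g i) - (∑ j ∈ B, g j) ≤ 0 ∧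
      (A.Nonempty → (∑ i ∈ A, g i) - (∑ j ∈ B, g j) < 0) := by
  classical
  open Finset TopkAux in
  -- key: g i < g j for i ∈ A, j ∈ B
  have key : ∀ i ∈ A, ∀ j ∈ B, g i < g j := by
    intro i hi j hj
    rw [hA] at hi; rw [hB] at hj
    simp only [Finset.mem_filter, Finset.mem_univ, true_and, topkMask,
      decide_eq_false_iff_not, decide_eq_true_eq, not_lt] at hi hj
    obtain ⟨hi1, hi2⟩ := hi
    obtain ⟨hj1, hj2⟩ := hj
    have hij : i ≠ j := by
      intro h; subst h; exact absurd hj1 (not_lt.mpr hi1)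
    -- s i < s j
    have hsij : s i < s j := by
      rcases lt_trichotomy (s i) (s j) with h | h | h
      · exact h
      · exact absurd (hinj h) hij
      · exfalso
        have := TopkAux.rank_lt_of_lt s h
        unfold TopkAux.rank at this
        omega
    -- s' j < s' i
    have hsji : s' j < s' i := by
      rcases lt_trichotomy (s' j) (s' i) with h | h | h
      · exact h
      · exact absurd (hinj' h) hij.symm
      · exfalso
        have := TopkAux.rank_lt_of_lt s' h
        unfold TopkAux.rank at this
        omega
    rw [hs'] at hsji
    simp only at hsji
    nlinarith
  -- card A = card B
  have hcard : A.card = B.card := by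
    have hT : (Finset.univ.filter (fun i => topkMask n k s i = true)).card
        = (Finset.univ.filter (fun i => topkMask n k s' i = true)).card := by
      rw [TopkAux.card_mask hinj, TopkAux.card_mask hinj']
    have hAeq : A = (Finset.univ.filter (fun i => topkMask n k s' i = true)) \
        (Finset.univ.filter (fun i => topkMask n k s i = true)) := by
      rw [hA]; ext i
      simp only [Finset.mem_filter, Finset.mem_univ, true_and, Finset.mem_sdiff,
        Bool.not_eq_true]
      tauto
    have hBeq : B = (Finset.univ.filter (fun i => topkMask n k s i = true)) \
        (Finset.univ.filter (fun i => topkMask n k s' i = true)) := by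
      rw [hB]; ext i
      simp only [Finset.mem_filter, Finset.mem_univ, true_and, Finset.mem_sdiff,
        Bool.not_eq_true]
    rw [hAeq, hBeq]
    exact Finset.card_sdiff_comm hT.symm
  -- strict lemma
  have hstrict : A.Nonempty → (∑ i ∈ A, g i) - (∑ j ∈ B, g j) < 0 := by
    intro hne
    have e : (A : Type) ≃ (B : Type) := Finset.equivOfCardEq hcard
    have hBsum : (∑ j ∈ B, g j) = ∑ x : A, g (e x) := by
      rw [← Finset.sum_coe_sort B (fun j => g j)]
      exact (Equiv.sum_comp e (fun x => g (x : Fin n))).symm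
    have hAsum : (∑ i ∈ A, g i) = ∑ x : A, g x :=
      (Finset.sum_coe_sort A (fun j => g j)).symm
    have : Nonempty A := Finset.Nonempty.to_subtype hne
    have hlt : (∑ x : A, g x) < ∑ x : A, g (e x) := by
      apply Finset.sum_lt_sum_of_nonempty Finset.univ_nonempty
      intro x _
      exact key x x.2 (e x) (e x).2
    rw [hAsum, hBsum]
    linarith
  refine ⟨?_, hstrict⟩
  rcases A.eq_empty_or_nonempty with hAe | hne
  · have hBe : B = ∅ := by
      rw [hAe] at hcard
      exact Finset.card_eq_zero.mp hcard.symm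
    simp [hAe, hBe]
  · exact le_of_lt (hstrict hne)
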